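/- For every instance I = (F_S, F_B) of bilateral trade in which F_S and F_B have finite first moments, letting μ = E_{S ~ F_S}[S], the mechanism M_S that draws x uniformly from [0,3] and posts the price x·μ satisfies (1/3)·∫₀³ W(I, x·μ) dx ≥ (2/3)·OPT(I). -/

import Mathlib

open MeasureTheory Set

/-- Expected welfare of the fixed price `p` on the bilateral-trade instance `(μ, ν)`. -/
noncomputable def welfare (μ ν : Measure ℝ) (p : ℝ) : ℝ :=
  ∫ z : ℝ × ℝ, (z.1 + if z.1 ≤ p ∧ p ≤ z.2 then z.2 - z.1 else 0) ∂(μ.prod ν)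

/-- Optimal welfare `OPT(I) = E[max(S,B)]`. -/
noncomputable def optWelfare (μ ν : Measure ℝ) : ℝ :=
  ∫ z : ℝ × ℝ, max z.1 z.2 ∂(μ.prod ν)

lemma ae_prod_of_ae {μ ν : Measure ℝ} [SFinite ν] {p q : ℝ → Prop}
    (hp : ∀ᵐ s ∂μ, p s) (hq : ∀ᵐ b ∂ν, q b) :
    ∀ᵐ z ∂(μ.prod ν), p z.1 ∧ q z.2 := by
  rw [ae_iff] at hp hq ⊢
  refine measure_mono_null (fun z hz => ?_)
    (by
      have : (μ.prod ν) (({s | ¬ p s} ×ˢ univ) ∪ (univ ×ˢ {b | ¬ q b})) = 0 := by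
        refine measure_union_null ?_ ?_ <;> rw [Measure.prod_prod]
        · rw [hp, zero_mul]
        · rw [hq, mul_zero]
      exact this)
  simp only [Set.mem_setOf_eq, not_and_or] at hz
  rcases hz with h | h
  · exact Or.inl ⟨h, trivial⟩
  · exact Or.inr ⟨trivial, h⟩

lemma integral_ite_interval (a c K : ℝ) :
    (∫ x in (0:ℝ)..3, if a ≤ x ∧ x ≤ c then K else 0) =
      max 0 (min 3 c - max 0 a) * K := by
  have h03 : (0:ℝ) ≤ 3 := by norm_num
  have hfun : (fun x => if a ≤ x ∧ x ≤ c then K else 0) =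
      (Icc a c).indicator (fun _ => K) := by
    funext x; simp [Set.indicator, Set.mem_Icc]
  rw [intervalIntegral.integral_of_le h03, hfun,
    setIntegral_indicator measurableSet_Icc, setIntegral_const]
  have hvol : volume (Ioc (0:ℝ) 3 ∩ Icc a c) = ENNReal.ofReal (min 3 c - max 0 a) := by
    apply le_antisymm
    · calc volume (Ioc (0:ℝ) 3 ∩ Icc a c) ≤ volume (Icc (max 0 a) (min 3 c)) := by
            refine measure_mono fun x hx => ?_
            exact ⟨max_le hx.1.1.le hx.2.1, le_min hx.1.2 hx.2.2⟩
        _ = ENNReal.ofReal (min 3 c - max 0 a) := Real.volume_Icc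
    · rw [← Real.volume_Ioc]
      refine measure_mono fun x hx => ?_
      exact ⟨⟨lt_of_le_of_lt (le_max_left 0 a) hx.1, hx.2.trans (min_le_left 3 c)⟩,
        ⟨(le_max_right 0 a).trans hx.1.le, hx.2.trans (min_le_right 3 c)⟩⟩
  rw [measureReal_def, hvol, smul_eq_mul]
  rcases le_total 0 (min 3 c - max 0 a) with h | h
  · rw [ENNReal.toReal_ofReal h, max_eq_right h]
  · rw [ENNReal.ofReal_of_nonpos h, max_eq_left h]
    simp

lemma ite_intervalIntegrable (a c K : ℝ) :
    IntervalIntegrable (fun x => if a ≤ x ∧ x ≤ c then K else 0) volume 0 3 := by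
  have hfun : (fun x => if a ≤ x ∧ x ≤ c then K else 0) =
      (Icc a c).indicator (fun _ => K) := by
    funext x; simp [Set.indicator, Set.mem_Icc]
  rw [hfun]
  exact ((integrable_indicator_iff measurableSet_Icc).mpr
    (integrableOn_const measure_Icc_lt_top.ne)).intervalIntegrable

lemma key_pointwise {m s b : ℝ} (hm : 0 < m) (hs : 0 ≤ s) (hb : 0 ≤ b) :
    (if b ≤ 3*m then -m else b - (b/m + 1) * s) ≤
      max 0 (min 3 (b/m) - max 0 (s/m)) * (b - s) - 2 * max (b - s) 0 := by
  have hsm : max 0 (s/m) = s/m := max_eq_right (by positivity)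
  rw [hsm]
  rcases le_or_gt b (3*m) with h1 | h1
  · rw [if_pos h1]
    have hmin : min 3 (b/m) = b/m := min_eq_right (by rw [div_le_iff₀ hm]; linarith)
    rw [hmin]
    rcases le_or_gt s b with h2 | h2
    · rw [max_eq_right (by
        have : s/m ≤ b/m := by gcongr
        linarith), max_eq_left (by linarith : (0:ℝ) ≤ b - s)]
      have hd : (b/m - s/m) * (b - s) - 2 * (b - s) - (-m) = (b - s - m)^2 / m := by
        field_simp; ring
      have hd2 : 0 ≤ (b - s - m)^2 / m := by positivity
      linarith
    · rw [max_eq_left (by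
        have : b/m ≤ s/m := by gcongr
        linarith), max_eq_right (by linarith : b - s ≤ 0)]
      linarith
  · rw [if_neg (not_le.mpr h1)]
    have hmin : min 3 (b/m) = 3 := min_eq_left (by rw [le_div_iff₀ hm]; linarith)
    rw [hmin]
    rcases le_or_gt s b with h2 | h2
    · rw [max_eq_left (by linarith : (0:ℝ) ≤ b - s)]
      rcases le_or_gt s (3*m) with h3 | h3
      · rw [max_eq_right (by
          have : s/m ≤ 3 := by rw [div_le_iff₀ hm]; linarith
          linarith)]
        have hd : (3 - s/m) * (b - s) - 2 * (b - s) - (b - (b/m + 1) * s) = s^2 / m := by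
          field_simp; ring
        have hd2 : 0 ≤ s^2 / m := by positivity
        linarith
      · rw [max_eq_left (by
          have : (3:ℝ) ≤ s/m := by rw [le_div_iff₀ hm]; linarith
          linarith)]
        have h4 : 3*b ≤ b*(s/m) := by
          have h5 : (3:ℝ) ≤ s/m := by rw [le_div_iff₀ hm]; linarith
          nlinarith
        have h6 : (b/m)*s = b*(s/m) := by ring
        nlinarith
    · rw [max_eq_right (by linarith : b - s ≤ 0)]
      have : (3:ℝ) ≤ s/m := by rw [le_div_iff₀ hm]; linarith
      rw [max_eq_left (by linarith)]
      have h5 : 0 ≤ (b/m)*s := mul_nonneg (by positivity) hs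
      nlinarith

theorem stmt_7 (μ ν : Measure ℝ) [IsProbabilityMeasure μ] [IsProbabilityMeasure ν]
    (hμ : μ (Set.Iio 0) = 0) (hν : ν (Set.Iio 0) = 0)
    (hμi : Integrable id μ) (hνi : Integrable id ν) :
    (2 / 3) * optWelfare μ ν ≤ (1 / 3) * ∫ x in (0:ℝ)..3, welfare μ ν (x * ∫ s, s ∂μ) := by
  set m := ∫ s, s ∂μ with hm_def
  set P := μ.prod ν with hP_def
  have h03 : (0:ℝ) ≤ 3 := by norm_num
  -- basic a.e. facts
  have hae_s : ∀ᵐ s ∂μ, 0 ≤ s := by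
    rw [ae_iff]
    convert hμ using 2
    ext s; simp
  have hae_b : ∀ᵐ b ∂ν, 0 ≤ b := by
    rw [ae_iff]
    convert hν using 2
    ext b; simp
  have hae_z : ∀ᵐ z ∂P, 0 ≤ z.1 ∧ 0 ≤ z.2 := ae_prod_of_ae hae_s hae_b
  have hm0 : 0 ≤ m := integral_nonneg_of_ae hae_s
  -- integrability basics
  have hfst : Integrable (fun z : ℝ × ℝ => z.1) P := by
    simpa using hμi.mul_prod (integrable_const (1:ℝ) (μ := ν))
  have hsnd : Integrable (fun z : ℝ × ℝ => z.2) P := by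
    simpa using (integrable_const (1:ℝ) (μ := μ)).mul_prod hνi
  have habs : Integrable (fun z : ℝ × ℝ => |z.1| + |z.2|) P := hfst.abs.add hsnd.abs
  have habssub : ∀ z : ℝ × ℝ, |z.2 - z.1| ≤ |z.1| + |z.2| := by
    intro z
    rw [sub_eq_add_neg]
    calc |z.2 + -z.1| ≤ |z.2| + |-z.1| := abs_add_le _ _
      _ = |z.1| + |z.2| := by rw [abs_neg]; ring
  have hintfst : ∫ z : ℝ × ℝ, z.1 ∂P = m := by
    simpa using integral_prod_mul (μ := μ) (ν := ν) id (fun _ => (1:ℝ))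
  have hgain : Integrable (fun z : ℝ × ℝ => max (z.2 - z.1) 0) P := by
    refine habs.mono' ((measurable_snd.sub measurable_fst).max
      measurable_const).aestronglyMeasurable (ae_of_all _ fun z => ?_)
    rw [Real.norm_eq_abs]
    rcases le_total (z.2 - z.1) 0 with h | h
    · rw [max_eq_right h]; simp [abs_nonneg, add_nonneg]
    · rw [max_eq_left h, abs_of_nonneg h]
      have := habssub z
      have := abs_nonneg (z.2 - z.1)
      linarith [le_abs_self (z.2 - z.1)]
  have hmaxint : Integrable (fun z : ℝ × ℝ => max z.1 z.2) P := by
    refine habs.mono' (measurable_fst.max measurable_snd).aestronglyMeasurable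
      (ae_of_all _ fun z => ?_)
    rw [Real.norm_eq_abs]
    calc |max z.1 z.2| ≤ max |z.1| |z.2| := abs_max_le_max_abs_abs
      _ ≤ |z.1| + |z.2| := max_le (le_add_of_nonneg_right (abs_nonneg _))
          (le_add_of_nonneg_left (abs_nonneg _))
  have hOPT : optWelfare μ ν = m + ∫ z : ℝ × ℝ, max (z.2 - z.1) 0 ∂P := by
    have hpt : ∀ z : ℝ × ℝ, max z.1 z.2 = z.1 + max (z.2 - z.1) 0 := by
      intro z
      rcases le_total z.1 z.2 with h | h
      · rw [max_eq_right h, max_eq_left (sub_nonneg.mpr h)]; ring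
      · rw [max_eq_left h, max_eq_right (sub_nonpos.mpr h)]; ring
    rw [optWelfare, ← hP_def]
    rw [integral_congr_ae (ae_of_all _ hpt), integral_add hfst hgain, hintfst]
  -- case m = 0
  rcases eq_or_lt_of_le hm0 with hm | hm
  · have hμ0 : ∀ᵐ s ∂μ, s = 0 := by
      have := (integral_eq_zero_iff_of_nonneg_ae hae_s hμi).mp hm.symm
      filter_upwards [this] with s hs using hs
    have hwelf0 : welfare μ ν 0 = optWelfare μ ν := by
      rw [welfare, optWelfare]
      refine integral_congr_ae ?_
      filter_upwards [ae_prod_of_ae hμ0 hae_b] with z hz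
      rw [hz.1, if_pos ⟨le_refl 0, hz.2⟩, max_eq_right hz.2]
      ring
    have hO : 0 ≤ optWelfare μ ν := by
      refine integral_nonneg_of_ae ?_
      filter_upwards [hae_z] with z hz using le_trans hz.1 (le_max_left _ _)
    have : (fun x : ℝ => welfare μ ν (x * m)) = fun _ => optWelfare μ ν := by
      funext x; rw [← hm, mul_zero, hwelf0]
    rw [this, intervalIntegral.integral_const]
    simp only [sub_zero, smul_eq_mul]
    linarith
  -- main case m > 0
  · haveI hfin : IsFiniteMeasure (volume.restrict (Set.Ioc (0:ℝ) 3)) := by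
      constructor
      rw [Measure.restrict_apply_univ, Real.volume_Ioc]
      exact ENNReal.ofReal_lt_top
    set F : ℝ × ℝ → ℝ :=
      fun z => max 0 (min 3 (z.2/m) - max 0 (z.1/m)) * (z.2 - z.1) with hF_def
    have hFmeas : Measurable F := by
      apply Measurable.mul
      · exact measurable_const.max ((Measurable.min measurable_const
          (measurable_snd.div_const m)).sub
          (measurable_const.max (measurable_fst.div_const m)))
      · exact measurable_snd.sub measurable_fst
    have hFbound : ∀ z : ℝ × ℝ, |F z| ≤ 3 * (|z.1| + |z.2|) := by
      intro z
      have h1 : max 0 (min 3 (z.2/m) - max 0 (z.1/m)) ≤ 3 := by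
        refine max_le (by norm_num) ?_
        have := min_le_left 3 (z.2/m)
        have := le_max_left 0 (z.1/m)
        linarith
      have h0 : 0 ≤ max 0 (min 3 (z.2/m) - max 0 (z.1/m)) := le_max_left _ _
      rw [hF_def, abs_mul, abs_of_nonneg h0]
      calc max 0 (min 3 (z.2/m) - max 0 (z.1/m)) * |z.2 - z.1|
          ≤ 3 * |z.2 - z.1| := by
            apply mul_le_mul_of_nonneg_right h1 (abs_nonneg _)
        _ ≤ 3 * (|z.1| + |z.2|) := by
            have := habssub z; linarith
    have hFint : Integrable F P := by
      refine (habs.const_mul 3).mono' hFmeas.aestronglyMeasurable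
        (ae_of_all _ fun z => ?_)
      rw [Real.norm_eq_abs]
      exact hFbound z
    -- Fubini swap
    have hu : Integrable
        (Function.uncurry fun (x : ℝ) (z : ℝ × ℝ) =>
          z.1 + if z.1 ≤ x*m ∧ x*m ≤ z.2 then z.2 - z.1 else 0)
        ((volume.restrict (Set.Ioc (0:ℝ) 3)).prod P) := by
      have hmeas : Measurable (Function.uncurry fun (x : ℝ) (z : ℝ × ℝ) =>
          z.1 + if z.1 ≤ x*m ∧ x*m ≤ z.2 then z.2 - z.1 else 0) := by
        apply Measurable.add
        · exact measurable_snd.fst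
        · refine Measurable.ite ?_ (measurable_snd.snd.sub measurable_snd.fst)
            measurable_const
          exact (measurableSet_le measurable_snd.fst (measurable_fst.mul_const m)).inter
            (measurableSet_le (measurable_fst.mul_const m) measurable_snd.snd)
      have hbnd : Integrable (fun p : ℝ × (ℝ × ℝ) => 2 * (|p.2.1| + |p.2.2|))
          ((volume.restrict (Set.Ioc (0:ℝ) 3)).prod P) := by
        have := (integrable_const (1:ℝ)
          (μ := volume.restrict (Set.Ioc (0:ℝ) 3))).mul_prod habs
        simpa using this.const_mul 2
      refine hbnd.mono' hmeas.aestronglyMeasurable (ae_of_all _ fun p => ?_)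
      rw [Real.norm_eq_abs]
      show |p.2.1 + if p.2.1 ≤ p.1*m ∧ p.1*m ≤ p.2.2 then p.2.2 - p.2.1 else 0|
        ≤ 2 * (|p.2.1| + |p.2.2|)
      calc |p.2.1 + if p.2.1 ≤ p.1*m ∧ p.1*m ≤ p.2.2 then p.2.2 - p.2.1 else 0|
          ≤ |p.2.1| + |if p.2.1 ≤ p.1*m ∧ p.1*m ≤ p.2.2 then p.2.2 - p.2.1 else 0| :=
            abs_add_le _ _
        _ ≤ 2 * (|p.2.1| + |p.2.2|) := by
            split_ifs with h
            · have := habssub p.2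
              have := abs_nonneg p.2.1
              have := abs_nonneg p.2.2
              linarith
            · simp only [abs_zero]
              have := abs_nonneg p.2.1
              have := abs_nonneg p.2.2
              linarith
    have hswap : (∫ x in Set.Ioc (0:ℝ) 3, welfare μ ν (x*m) ∂volume)
        = ∫ z : ℝ × ℝ, (∫ x in Set.Ioc (0:ℝ) 3,
            (z.1 + if z.1 ≤ x*m ∧ x*m ≤ z.2 then z.2 - z.1 else 0) ∂volume) ∂P := by
      exact integral_integral_swap hu
    -- inner integral
    have hinner : ∀ z : ℝ × ℝ, (∫ x in Set.Ioc (0:ℝ) 3,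
        (z.1 + if z.1 ≤ x*m ∧ x*m ≤ z.2 then z.2 - z.1 else 0) ∂volume)
        = 3 * z.1 + F z := by
      intro z
      rw [← intervalIntegral.integral_of_le h03]
      have hcond : (fun x => z.1 + if z.1 ≤ x*m ∧ x*m ≤ z.2 then z.2 - z.1 else 0)
          = fun x => z.1 + if z.1/m ≤ x ∧ x ≤ z.2/m then z.2 - z.1 else 0 := by
        funext x
        congr 1
        have h1 : (z.1 ≤ x*m) ↔ (z.1/m ≤ x) := (div_le_iff₀ hm).symm
        have h2 : (x*m ≤ z.2) ↔ (x ≤ z.2/m) := (le_div_iff₀ hm).symm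
        exact if_congr (and_congr h1 h2) rfl rfl
      rw [hcond, intervalIntegral.integral_add intervalIntegrable_const
        (ite_intervalIntegrable _ _ _), intervalIntegral.integral_const,
        integral_ite_interval]
      rw [hF_def]
      simp only [smul_eq_mul]
      ring
    -- the linear lower bound L
    set c : ℝ → ℝ := fun b => if b ≤ 3*m then -m else b with hc_def
    set d : ℝ → ℝ := fun b => if b ≤ 3*m then 0 else -(b/m + 1) with hd_def
    have hcbnd : Integrable (fun b : ℝ => m + |b|) ν := by
      have := (integrable_const m (μ := ν)).add hνi.abs
      simpa [Function.id_def] using this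
    have hcint : Integrable c ν := by
      refine hcbnd.mono' ?_ (ae_of_all _ fun b => ?_)
      · exact (Measurable.ite (measurableSet_le measurable_id' measurable_const)
          measurable_const measurable_id').aestronglyMeasurable
      · rw [Real.norm_eq_abs, hc_def]
        simp only
        split_ifs with h
        · rw [abs_neg, abs_of_nonneg hm0]
          have := abs_nonneg b; linarith
        · linarith [le_abs_self b, hm0]
    have hdbnd : Integrable (fun b : ℝ => |b|/m + 1) ν := by
      have := (hνi.abs.div_const m).add (integrable_const (1:ℝ) (μ := ν))
      simpa [Function.id_def] using this
    have hdint : Integrable d ν := by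
      refine hdbnd.mono' ?_ (ae_of_all _ fun b => ?_)
      · exact (Measurable.ite (measurableSet_le measurable_id' measurable_const)
          measurable_const
          ((measurable_id'.div_const m).add_const 1).neg).aestronglyMeasurable
      · rw [Real.norm_eq_abs, hd_def]
        simp only
        split_ifs with h
        · simp only [abs_zero]; positivity
        · rw [abs_neg]
          calc |b/m + 1| ≤ |b/m| + 1 := by
                have := abs_add_le (b/m) 1; simpa using this
            _ = |b|/m + 1 := by rw [abs_div, abs_of_pos hm]
    set L : ℝ × ℝ → ℝ := fun z => c z.2 + z.1 * d z.2 with hL_def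
    have hLint1 : Integrable (fun z : ℝ × ℝ => c z.2) P := by
      simpa using (integrable_const (1:ℝ) (μ := μ)).mul_prod hcint
    have hLint2 : Integrable (fun z : ℝ × ℝ => z.1 * d z.2) P := by
      simpa using hμi.mul_prod hdint
    have hLint : Integrable L P := hLint1.add hLint2
    have hLval : ∫ z, L z ∂P = -m := by
      rw [hL_def]
      have e1 : ∫ z : ℝ × ℝ, c z.2 ∂P = ∫ b, c b ∂ν := by
        simpa using integral_prod_mul (μ := μ) (ν := ν) (fun _ => (1:ℝ)) c
      have e2 : ∫ z : ℝ × ℝ, z.1 * d z.2 ∂P = m * ∫ b, d b ∂ν := by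
        simpa using integral_prod_mul (μ := μ) (ν := ν) id d
      rw [integral_add hLint1 hLint2, e1, e2, ← integral_const_mul _ _,
        ← integral_add hcint (hdint.const_mul m)]
      have : ∀ b : ℝ, c b + m * d b = -m := by
        intro b
        rw [hc_def, hd_def]
        simp only
        split_ifs with h
        · ring
        · field_simp; ring
      rw [integral_congr_ae (ae_of_all _ this), integral_const]
      simp
    have hDL : ∀ᵐ z ∂P, L z ≤ F z - 2 * max (z.2 - z.1) 0 := by
      filter_upwards [hae_z] with z hz
      have hk := key_pointwise hm hz.1 hz.2
      rw [hL_def, hF_def, hc_def, hd_def]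
      simp only
      split_ifs with h
      · rw [if_pos h] at hk
        nlinarith [hk]
      · rw [if_neg h] at hk
        nlinarith [hk]
    have hDint : Integrable (fun z : ℝ × ℝ => F z - 2 * max (z.2 - z.1) 0) P :=
      hFint.sub (hgain.const_mul 2)
    have hfinal : -m ≤ (∫ z, F z ∂P) - 2 * ∫ z : ℝ × ℝ, max (z.2 - z.1) 0 ∂P := by
      have := integral_mono_ae hLint hDint hDL
      rw [hLval] at this
      rwa [integral_sub hFint (hgain.const_mul 2), integral_const_mul _ _] at this
    -- put it together
    have hW : (∫ x in (0:ℝ)..3, welfare μ ν (x * m)) = 3*m + ∫ z, F z ∂P := by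
      rw [intervalIntegral.integral_of_le h03, hswap,
        integral_congr_ae (ae_of_all _ hinner),
        integral_add (hfst.const_mul 3) hFint, integral_const_mul _ _, hintfst]
    rw [hOPT, hW]
    linarith
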